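/- In any AND(1)-realization of a cycle C_n, there is a cyclic labeling l : V → {1,...,n} following the cycle (clockwise or anticlockwise) such that the vertex labeled 1 is first and the vertex labeled n is last in the order of representative points, and for every vertex u, |l(u) − π(u)| ≤ 1, where π(u) is the rank of u in the order of representative points. If moreover the realization is a c-AND(1)-realization (each representative is the center of its interval), then l(u) = π(u) for all u. -/

import Mathlib

open SimpleGraph


/-- An `AND(1)`-realization of `G`: each vertex `v` gets a closed interval
`[L v, R v]` and a representative point `p v` in it, with adjacency of distinct
vertices iff mutual containment of the representative points. -/
def IsAND1Real {V : Type*} (G : SimpleGraph V) (L R p : V → ℝ) : Prop :=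
  (∀ v, L v ≤ p v ∧ p v ≤ R v) ∧
    ∀ u v : V, u ≠ v →
      (G.Adj u v ↔ L u ≤ p v ∧ p v ≤ R u ∧ L v ≤ p u ∧ p u ≤ R v)

/-- A central (`c`-)`AND(1)`-realization: moreover each representative point is
the midpoint of its interval. -/
def IsCAND1Real {V : Type*} (G : SimpleGraph V) (L R p : V → ℝ) : Prop :=
  IsAND1Real G L R p ∧ ∀ v, p v = (L v + R v) / 2

/-- The class `AND(1)`. -/
def InAND1 {V : Type*} (G : SimpleGraph V) : Prop :=
  ∃ L R p : V → ℝ, IsAND1Real G L R p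

/-- The class `c-AND(1)`. -/
def InCAND1 {V : Type*} (G : SimpleGraph V) : Prop :=
  ∃ L R p : V → ℝ, IsCAND1Real G L R p

/-- A linear ordering of the vertices (an injective map to `ℝ`) satisfying the
four point condition: `x < u < v < y` with `xv, uy ∈ E` implies `uv ∈ E`. -/
def FourPointCond {V : Type*} (G : SimpleGraph V) (f : V → ℝ) : Prop :=
  Function.Injective f ∧
    ∀ x u v y : V, f x < f u → f u < f v → f v < f y →
      G.Adj x v → G.Adj u y → G.Adj u v


open SimpleGraph in
theorem nat_mod_helper {n x y : ℕ} (hn : 3 ≤ n) (hx : x < n) (hy : y < n) :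
    ((n - y + x) % n = 1) ↔ (y + 1 = x ∨ (x = 0 ∧ y = n - 1)) := by
  rcases Nat.lt_or_ge (n - y + x) n with hlt | hge
  · rw [Nat.mod_eq_of_lt hlt]; omega
  · have h2 : n - y + x - n < n := by omega
    rw [Nat.mod_eq_sub_mod hge, Nat.mod_eq_of_lt h2]; omega

open SimpleGraph in
theorem cyc_adj_iff {n : ℕ} (hn : 3 ≤ n) (a b : Fin n) :
    (SimpleGraph.cycleGraph n).Adj a b ↔
      ((a:ℕ)+1 = b ∨ (b:ℕ)+1 = a ∨ ((a:ℕ) = 0 ∧ (b:ℕ) = n-1) ∨ ((b:ℕ) = 0 ∧ (a:ℕ) = n-1)) := by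
  rw [cycleGraph_adj']
  have ha := a.isLt; have hb := b.isLt
  rw [Fin.sub_def, Fin.sub_def]
  simp only [Fin.val_mk]
  rw [nat_mod_helper hn ha hb, nat_mod_helper hn hb ha]
  omega

open SimpleGraph in
theorem trichotomy {n : ℕ} (hn : 3 ≤ n)
    (A : Fin n → Fin n → Prop)
    (hsym : ∀ a b, A a b → A b a)
    (hFPC : ∀ x u v y : Fin n, x < u → u < v → v < y → A x v → A u y → A u v)
    (r : Fin n ≃ Fin n)
    (hr : ∀ i j : Fin n, A (r i) (r j) ↔ (SimpleGraph.cycleGraph n).Adj i j)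
    (hr0 : r ⟨0, Nat.zero_lt_of_lt (show 2 < n from hn)⟩ = ⟨0, Nat.zero_lt_of_lt (show 2 < n from hn)⟩)
    (k : ℕ) (hk1 : 1 ≤ k) (hkn : k < n)
    (hclean : ∀ i : Fin n, (i : ℕ) < k → (r i : ℕ) < k) :
    (r ⟨k, hkn⟩ : ℕ) = k ∨
      (k = 1 ∧ (r ⟨k, hkn⟩ : ℕ) = n - 1) ∨
      ((r ⟨k, hkn⟩ : ℕ) = k + 1 ∧ k + 2 ≤ n - 1 ∧
        ∃ h : k + 1 < n, (r ⟨k + 1, h⟩ : ℕ) = k) := by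
  classical
  have hAdj : ∀ (q1 q2 : ℕ) (h1 : q1 < n) (h2 : q2 < n),
      A (r ⟨q1, h1⟩) (r ⟨q2, h2⟩) ↔
        (q1 + 1 = q2 ∨ q2 + 1 = q1 ∨ (q1 = 0 ∧ q2 = n - 1) ∨ (q2 = 0 ∧ q1 = n - 1)) := by
    intro q1 q2 h1 h2; rw [hr]; exact cyc_adj_iff hn _ _
  have hco : ∀ i : Fin n, k ≤ (i : ℕ) → k ≤ (r i : ℕ) := by
    intro i hi
    by_contra hlt
    push_neg at hlt
    have himg : (Finset.univ.filter (fun j : Fin n => (j:ℕ) < k)).image r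
        = Finset.univ.filter (fun j : Fin n => (j:ℕ) < k) := by
      apply Finset.eq_of_subset_of_card_le
      · intro x hx
        simp only [Finset.mem_image, Finset.mem_filter, Finset.mem_univ, true_and] at *
        obtain ⟨j, hj, rfl⟩ := hx
        exact hclean j hj
      · rw [Finset.card_image_of_injective _ r.injective]
    have hmem : r i ∈ (Finset.univ.filter (fun j : Fin n => (j:ℕ) < k)) := by
      simp only [Finset.mem_filter, Finset.mem_univ, true_and]; exact hlt
    rw [← himg] at hmem
    simp only [Finset.mem_image, Finset.mem_filter, Finset.mem_univ, true_and] at hmem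
    obtain ⟨j, hj, hji⟩ := hmem
    have := r.injective hji
    omega
  have hcoval : ∀ (q : ℕ) (h : q < n), k ≤ q → k ≤ (r ⟨q, h⟩ : ℕ) :=
    fun q h hq => hco ⟨q, h⟩ hq
  have hcleanval : ∀ (q : ℕ) (h : q < n), q < k → (r ⟨q, h⟩ : ℕ) < k :=
    fun q h hq => hclean ⟨q, h⟩ hq
  have hvalAt : ∀ (q1 q2 : ℕ) (h1 : q1 < n) (h2 : q2 < n), q1 = q2 →
      (r ⟨q1, h1⟩ : ℕ) = (r ⟨q2, h2⟩ : ℕ) := by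
    intro q1 q2 h1 h2 e; subst e; rfl
  have hinjval : ∀ (q1 q2 : ℕ) (h1 : q1 < n) (h2 : q2 < n),
      (r ⟨q1, h1⟩ : ℕ) = (r ⟨q2, h2⟩ : ℕ) → q1 = q2 := by
    intro q1 q2 h1 h2 hval
    have h := r.injective (Fin.val_injective hval)
    exact congrArg Fin.val h
  obtain ⟨m, hmdef⟩ : ∃ m, (r ⟨k, hkn⟩ : ℕ) = m := ⟨_, rfl⟩
  by_cases hmk : m = k
  · left; omega
  have hkm : k ≤ m := by have := hcoval k hkn (le_refl k); omega
  have hm1 : k + 1 ≤ m := by omega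
  have hmn : m < n := by have := (r ⟨k, hkn⟩).isLt; omega
  have hkn2 : k + 1 < n := by omega
  have hkm1n : k - 1 < n := by omega
  have hc0 : (r ⟨k - 1, hkm1n⟩ : ℕ) < k := hcleanval _ _ (by omega)
  have key : ∀ (q' q : ℕ) (h' : q' < n) (h : q < n),
      k + 1 ≤ q' → k + 1 ≤ q → (q = q' + 1 ∨ q' = q + 1) →
      (r ⟨q', h'⟩ : ℕ) < m → m < (r ⟨q, h⟩ : ℕ) → q' = k + 1 := by
    intro q' q h' h hq'k hqk hadjpos hlow hhigh
    have hka : k ≤ (r ⟨q', h'⟩ : ℕ) := hcoval _ _ (by omega)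
    have o1 : r ⟨k - 1, hkm1n⟩ < r ⟨q', h'⟩ := by rw [Fin.lt_def]; omega
    have o2 : r ⟨q', h'⟩ < r ⟨k, hkn⟩ := by rw [Fin.lt_def]; omega
    have o3 : r ⟨k, hkn⟩ < r ⟨q, h⟩ := by rw [Fin.lt_def]; omega
    have eAC : A (r ⟨k - 1, hkm1n⟩) (r ⟨k, hkn⟩) := by rw [hAdj]; omega
    have eUY : A (r ⟨q', h'⟩) (r ⟨q, h⟩) := by rw [hAdj]; omega
    have hcon := hFPC _ _ _ _ o1 o2 o3 eAC eUY
    rw [hAdj] at hcon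
    omega
  have posOf : ∀ (v : ℕ) (hv : v < n), ∃ (q : ℕ) (hq : q < n), (r ⟨q, hq⟩ : ℕ) = v := by
    intro v hv
    refine ⟨(r.symm ⟨v, hv⟩ : ℕ), (r.symm ⟨v, hv⟩).isLt, ?_⟩
    rw [Fin.eta, Equiv.apply_symm_apply]
  obtain ⟨b, hbdef⟩ : ∃ b, (r ⟨k + 1, hkn2⟩ : ℕ) = b := ⟨_, rfl⟩
  have hbk : k ≤ b := by have := hcoval (k+1) hkn2 (by omega); omega
  have hbnem : b ≠ m := by
    intro e
    have := hinjval (k+1) k hkn2 hkn (by omega)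
    omega
  -- eliminate the case b > m
  have hbm : b < m := by
    rcases Nat.lt_or_ge b m with h | h
    · exact h
    exfalso
    obtain ⟨qk, hqkn, hqkval⟩ := posOf k (by omega)
    have hqk2 : k + 2 ≤ qk := by
      have h1 : ¬ qk < k := fun hh => by have := hcleanval qk hqkn hh; omega
      have h2 : qk ≠ k := fun e => by have := hvalAt qk k hqkn hkn e; omega
      have h3 : qk ≠ k + 1 := fun e => by have := hvalAt qk (k+1) hqkn hkn2 e; omega
      omega
    have hPex : ∃ q, ∃ hq : q < n, k + 1 ≤ q ∧ (r ⟨q, hq⟩ : ℕ) < m :=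
      ⟨qk, hqkn, by omega, by omega⟩
    obtain ⟨hqn, hq1, hqval⟩ := Nat.find_spec hPex
    have hfk2 : k + 2 ≤ Nat.find hPex := by
      rcases Nat.eq_or_lt_of_le hq1 with e | hlt
      · exfalso
        have := hvalAt (Nat.find hPex) (k+1) hqn hkn2 e.symm
        omega
      · by_contra hh
        push_neg at hh
        have e : Nat.find hPex = k + 1 := by omega
        have := hvalAt (Nat.find hPex) (k+1) hqn hkn2 e
        omega
    have hq1n : Nat.find hPex - 1 < n := by omega
    have hq1high : m < (r ⟨Nat.find hPex - 1, hq1n⟩ : ℕ) := by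
      have h1 : ¬ (∃ hq : Nat.find hPex - 1 < n, k + 1 ≤ Nat.find hPex - 1 ∧
          (r ⟨Nat.find hPex - 1, hq⟩ : ℕ) < m) := Nat.find_min hPex (by omega)
      have h2 : ¬ ((r ⟨Nat.find hPex - 1, hq1n⟩ : ℕ) < m) := fun hh =>
        h1 ⟨hq1n, by omega, hh⟩
      have h3 : (r ⟨Nat.find hPex - 1, hq1n⟩ : ℕ) ≠ m := fun e => by
        have := hinjval _ k hq1n hkn (by omega); omega
      omega
    have := key (Nat.find hPex) (Nat.find hPex - 1) hqn hq1n hq1 (by omega)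
      (by omega) hqval hq1high
    omega
  rcases Nat.lt_or_ge m (n-1) with hmlt | hmge
  · -- swap case
    right; right
    obtain ⟨t, htn, htval⟩ := posOf (m+1) (by omega)
    have ht : k + 2 ≤ t := by
      have h1 : ¬ t < k := fun hh => by have := hcleanval t htn hh; omega
      have h2 : t ≠ k := fun e => by have := hvalAt t k htn hkn e; omega
      have h3 : t ≠ k + 1 := fun e => by have := hvalAt t (k+1) htn hkn2 e; omega
      omega
    have hP2ex : ∃ q, ∃ hq : q < n, k + 1 ≤ q ∧ m < (r ⟨q, hq⟩ : ℕ) :=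
      ⟨t, htn, by omega, by omega⟩
    obtain ⟨h2n, h21, h2val⟩ := Nat.find_spec hP2ex
    have hq2k2 : k + 2 ≤ Nat.find hP2ex := by
      rcases Nat.eq_or_lt_of_le h21 with e | hlt
      · exfalso
        have := hvalAt (Nat.find hP2ex) (k+1) h2n hkn2 e.symm
        omega
      · by_contra hh
        push_neg at hh
        have e : Nat.find hP2ex = k + 1 := by omega
        have := hvalAt (Nat.find hP2ex) (k+1) h2n hkn2 e
        omega
    have h2m1n : Nat.find hP2ex - 1 < n := by omega
    have h2low : (r ⟨Nat.find hP2ex - 1, h2m1n⟩ : ℕ) < m := by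
      have h1 : ¬ (∃ hq : Nat.find hP2ex - 1 < n, k + 1 ≤ Nat.find hP2ex - 1 ∧
          m < (r ⟨Nat.find hP2ex - 1, hq⟩ : ℕ)) := Nat.find_min hP2ex (by omega)
      have h2 : ¬ (m < (r ⟨Nat.find hP2ex - 1, h2m1n⟩ : ℕ)) := fun hh =>
        h1 ⟨h2m1n, by omega, hh⟩
      have h3 : (r ⟨Nat.find hP2ex - 1, h2m1n⟩ : ℕ) ≠ m := fun e => by
        have := hinjval _ k h2m1n hkn (by omega); omega
      omega
    have hq2eq : Nat.find hP2ex - 1 = k + 1 :=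
      key (Nat.find hP2ex - 1) (Nat.find hP2ex) h2m1n h2n (by omega) (by omega)
        (by omega) h2low h2val
    have hm2 : m = k + 1 := by
      by_contra hm2
      obtain ⟨u0, hu01, hu02, hu03, hu04⟩ : ∃ u0, k ≤ u0 ∧ u0 < m ∧ u0 ≠ b ∧ u0 < n := by
        by_cases hbk' : b = k
        · exact ⟨k+1, by omega, by omega, by omega, by omega⟩
        · exact ⟨k, le_refl k, by omega, by omega, by omega⟩
      obtain ⟨t3, ht3n, ht3val⟩ := posOf u0 hu04
      have ht3 : k + 3 ≤ t3 := by
        have h1 : ¬ t3 < k := fun hh => by have := hcleanval t3 ht3n hh; omega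
        have h2 : t3 ≠ k := fun e => by have := hvalAt t3 k ht3n hkn e; omega
        have h3 : t3 ≠ k + 1 := fun e => by have := hvalAt t3 (k+1) ht3n hkn2 e; omega
        have h4 : t3 ≠ Nat.find hP2ex := fun e => by
          have := hvalAt t3 (Nat.find hP2ex) ht3n h2n e; omega
        omega
      have hP3ex : ∃ q, ∃ hq : q < n, k + 3 ≤ q ∧ (r ⟨q, hq⟩ : ℕ) < m :=
        ⟨t3, ht3n, by omega, by omega⟩
      obtain ⟨h3n, h31, h3val⟩ := Nat.find_spec hP3ex
      have h3m1n : Nat.find hP3ex - 1 < n := by omega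
      have h3high : m < (r ⟨Nat.find hP3ex - 1, h3m1n⟩ : ℕ) := by
        by_cases hcase : Nat.find hP3ex - 1 = Nat.find hP2ex
        · have := hvalAt (Nat.find hP3ex - 1) (Nat.find hP2ex) h3m1n h2n hcase
          omega
        · have h1 : ¬ (∃ hq : Nat.find hP3ex - 1 < n, k + 3 ≤ Nat.find hP3ex - 1 ∧
              (r ⟨Nat.find hP3ex - 1, hq⟩ : ℕ) < m) := Nat.find_min hP3ex (by omega)
          have h2 : ¬ ((r ⟨Nat.find hP3ex - 1, h3m1n⟩ : ℕ) < m) := fun hh =>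
            h1 ⟨h3m1n, by omega, hh⟩
          have h3 : (r ⟨Nat.find hP3ex - 1, h3m1n⟩ : ℕ) ≠ m := fun e => by
            have := hinjval _ k h3m1n hkn (by omega); omega
          omega
      have := key (Nat.find hP3ex) (Nat.find hP3ex - 1) h3n h3m1n (by omega)
        (by omega) (by omega) h3val h3high
      omega
    refine ⟨by omega, by omega, hkn2, by omega⟩
  · -- m = n - 1 : reverse direction, only possible for k = 1
    right; left
    have hmeq : m = n - 1 := by omega
    by_cases hk2 : 2 ≤ k
    · exfalso
      have hn1n : n - 1 < n := by omega
      obtain ⟨istar, histar⟩ : ∃ v, (r ⟨n-1, hn1n⟩ : ℕ) = v := ⟨_, rfl⟩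
      have hist1 : k ≤ istar := by have := hcoval (n-1) hn1n (by omega); omega
      have hist2 : istar ≠ m := fun e => by
        have := hinjval (n-1) k hn1n hkn (by omega); omega
      have hist3 : istar < n - 1 := by have := (r ⟨n-1, hn1n⟩).isLt; omega
      have h0n : (0:ℕ) < n := by omega
      have hv0 : (r ⟨0, h0n⟩ : ℕ) = 0 := by rw [hr0]
      have hc01 : 1 ≤ (r ⟨k-1, hkm1n⟩ : ℕ) := by
        by_contra hc
        push_neg at hc
        have := hinjval (k-1) 0 hkm1n h0n (by omega)
        omega
      have o1 : r ⟨0, h0n⟩ < r ⟨k-1, hkm1n⟩ := by rw [Fin.lt_def]; omega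
      have o2 : r ⟨k-1, hkm1n⟩ < r ⟨n-1, hn1n⟩ := by rw [Fin.lt_def]; omega
      have o3 : r ⟨n-1, hn1n⟩ < r ⟨k, hkn⟩ := by rw [Fin.lt_def]; omega
      have eXV : A (r ⟨0, h0n⟩) (r ⟨n-1, hn1n⟩) := by rw [hAdj]; omega
      have eUY : A (r ⟨k-1, hkm1n⟩) (r ⟨k, hkn⟩) := by rw [hAdj]; omega
      have hcon := hFPC _ _ _ _ o1 o2 o3 eXV eUY
      rw [hAdj] at hcon
      omega
    · exact ⟨by omega, by omega⟩

open SimpleGraph in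
theorem main_struct {n : ℕ} (hn : 3 ≤ n)
    (A : Fin n → Fin n → Prop)
    (hsym : ∀ a b, A a b → A b a)
    (hFPC : ∀ x u v y : Fin n, x < u → u < v → v < y → A x v → A u y → A u v)
    (r : Fin n ≃ Fin n)
    (hr : ∀ i j : Fin n, A (r i) (r j) ↔ (SimpleGraph.cycleGraph n).Adj i j)
    (hr0 : r ⟨0, Nat.zero_lt_of_lt (show 2 < n from hn)⟩ = ⟨0, Nat.zero_lt_of_lt (show 2 < n from hn)⟩)
    (hgood : (r ⟨1, by omega⟩ : ℕ) ≠ n - 1) :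
    (∀ i : Fin n, (r i : ℕ) ≤ (i : ℕ) + 1 ∧ (i : ℕ) ≤ (r i : ℕ) + 1) ∧
      (r ⟨n - 1, Nat.sub_lt (Nat.zero_lt_of_lt (show 2 < n from hn)) Nat.one_pos⟩ : ℕ) = n - 1 := by
  have hvalAt : ∀ (q1 q2 : ℕ) (h1 : q1 < n) (h2 : q2 < n), q1 = q2 →
      (r ⟨q1, h1⟩ : ℕ) = (r ⟨q2, h2⟩ : ℕ) := by
    intro q1 q2 h1 h2 e; subst e; rfl
  have hvi : ∀ (i : Fin n) (q : ℕ) (h : q < n), (i : ℕ) = q → (r i : ℕ) = (r ⟨q, h⟩ : ℕ) := by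
    intro i q h e
    have : i = ⟨q, h⟩ := Fin.ext e
    rw [this]
  have h0n : (0:ℕ) < n := by omega
  have hv0 : (r ⟨0, h0n⟩ : ℕ) = 0 := by rw [hr0]
  have main : ∀ k : ℕ, 1 ≤ k → k ≤ n →
      ((∀ i : Fin n, (i:ℕ) < k → (r i:ℕ) < k) ∧
        (∀ i : Fin n, (i:ℕ) < k → ((r i:ℕ) ≤ (i:ℕ)+1 ∧ (i:ℕ) ≤ (r i:ℕ)+1)))
      ∨ (2 ≤ k ∧ k ≤ n-1 ∧
        (∀ i : Fin n, (i:ℕ) < k-1 → (r i:ℕ) < k-1) ∧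
        (∀ i : Fin n, (i:ℕ) < k+1 → ((r i:ℕ) ≤ (i:ℕ)+1 ∧ (i:ℕ) ≤ (r i:ℕ)+1)) ∧
        (∃ h : k-1 < n, (r ⟨k-1, h⟩:ℕ) = k) ∧ (∃ h : k < n, (r ⟨k, h⟩:ℕ) = k-1)) := by
    intro k
    induction k with
    | zero => omega
    | succ k ih =>
      intro _ hk1n
      by_cases hk0 : k = 0
      · subst hk0
        left
        constructor
        · intro i hi
          have := hvi i 0 h0n (by omega)
          omega
        · intro i hi
          have := hvi i 0 h0n (by omega)
          omega
      · have hk1 : 1 ≤ k := by omega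
        rcases ih hk1 (by omega) with ⟨hcl, hB⟩ |
          ⟨hsk2, hskn, hscl, hsB, ⟨hs1, hsv1⟩, ⟨hs2, hsv2⟩⟩
        · have hkn : k < n := by omega
          rcases trichotomy hn A hsym hFPC r hr hr0 k hk1 hkn hcl with
            h | ⟨hke, hkv⟩ | ⟨hv1, hb, ⟨hkn2, hv2⟩⟩
          · left
            constructor
            · intro i hi
              rcases Nat.lt_or_ge (i:ℕ) k with hik | hik
              · have := hcl i hik; omega
              · have := hvi i k hkn (by omega); omega
            · intro i hi
              rcases Nat.lt_or_ge (i:ℕ) k with hik | hik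
              · exact hB i hik
              · have := hvi i k hkn (by omega); omega
          · exfalso
            subst hke
            exact hgood hkv
          · right
            refine ⟨by omega, by omega, ?_, ?_, ⟨hkn, ?_⟩, ⟨hkn2, ?_⟩⟩
            · intro i hi
              exact hcl i (by omega)
            · intro i hi
              rcases Nat.lt_or_ge (i:ℕ) k with hik | hik
              · have := hB i hik; omega
              · rcases Nat.eq_or_lt_of_le hik with e | hik2
                · have := hvi i k hkn (by omega); omega
                · have := hvi i (k+1) hkn2 (by omega); omega
            · exact hv1
            · exact hv2
        · -- swap state at k: positions < k+1 are clean
          left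
          constructor
          · intro i hi
            rcases Nat.lt_or_ge (i:ℕ) (k-1) with hik | hik
            · have := hscl i hik; omega
            · rcases Nat.eq_or_lt_of_le hik with e | hik2
              · have := hvi i (k-1) hs1 (by omega); omega
              · have := hvi i k hs2 (by omega); omega
          · intro i hi
            exact hsB i (by omega)
  rcases main n (by omega) (le_refl n) with ⟨hcl, hB⟩ | ⟨_, h3, _⟩
  · refine ⟨fun i => hB i i.isLt, ?_⟩
    rcases main (n-1) (by omega) (by omega) with ⟨hcl1, hB1⟩ |
      ⟨hs2, hs3, hscl, hsB, ⟨hsp1, hsv1⟩, ⟨hsp2, hsv2⟩⟩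
    · have hn1 : n - 1 < n := by omega
      rcases trichotomy hn A hsym hFPC r hr hr0 (n-1) (by omega) hn1 hcl1 with
        h | ⟨he, _⟩ | ⟨_, hb, _⟩
      · exact h
      · omega
      · omega
    · exfalso
      have hkn' : n - 2 < n := by omega
      have hscl' : ∀ i : Fin n, (i:ℕ) < n - 2 → (r i : ℕ) < n - 2 := by
        intro i hi
        have := hscl i (by omega)
        omega
      have h12 := hvalAt (n-1-1) (n-2) hsp1 hkn' (by omega)
      rcases trichotomy hn A hsym hFPC r hr hr0 (n-2) (by omega) hkn' hscl' with
        h | ⟨he, hv⟩ | ⟨_, hb, _⟩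
      · omega
      · have h1n : (1:ℕ) < n := by omega
        have hg' : (r ⟨1, h1n⟩ : ℕ) ≠ n - 1 := hgood
        have := hvalAt (n-2) 1 hkn' h1n (by omega)
        omega
      · omega
  · omega

theorem fpc_of_real {V : Type*} (G : SimpleGraph V) (L R p : V → ℝ)
    (h : IsAND1Real G L R p) :
    ∀ x u v y : V, p x < p u → p u < p v → p v < p y → G.Adj x v → G.Adj u y → G.Adj u v := by
  intro x u v y h1 h2 h3 hxv huy
  obtain ⟨hb, hadj⟩ := h
  rw [hadj x v (fun e => by rw [e] at h1; linarith)] at hxv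
  rw [hadj u y (fun e => by rw [e] at h2; linarith)] at huy
  rw [hadj u v (fun e => by rw [e] at h2; exact lt_irrefl _ h2)]
  have hbu := hb u
  have hbv := hb v
  exact ⟨by linarith, by linarith [huy.2.1], by linarith [hxv.2.2.1], by linarith⟩

theorem central_contra {V : Type*} (G : SimpleGraph V) (L R p : V → ℝ)
    (hreal : IsAND1Real G L R p) (hcent : ∀ v, p v = (L v + R v) / 2)
    (a b c d : V) (h1 : p a < p b) (h2 : p b < p c) (h3 : p c < p d)
    (hac : G.Adj a c) (hbd : G.Adj b d) (hab : ¬ G.Adj a b) (hcd : ¬ G.Adj c d) :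
    False := by
  obtain ⟨hb', hadj⟩ := hreal
  rw [hadj a c (fun e => by rw [e] at h1; linarith)] at hac
  rw [hadj b d (fun e => by rw [e] at h2; linarith)] at hbd
  rw [hadj a b (fun e => by rw [e] at h1; exact lt_irrefl _ h1)] at hab
  rw [hadj c d (fun e => by rw [e] at h3; exact lt_irrefl _ h3)] at hcd
  have hLb : p a < L b := by
    by_contra hc
    push_neg at hc
    exact hab ⟨by linarith [(hb' a).1], by linarith [hac.2.1], hc, by linarith [hbd.2.1]⟩
  have hRc : R c < p d := by
    by_contra hc
    push_neg at hc
    exact hcd ⟨by linarith [hac.2.2.1], hc, by linarith [hbd.2.2.1], by linarith [(hb' d).2]⟩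
  have e1 := hcent b
  have e2 := hcent c
  have f1 : p d ≤ R b := hbd.2.1
  have f2 : L c ≤ p a := hac.2.2.1
  linarith

set_option maxHeartbeats 1000000 in
/-- In any `AND(1)`-realization of the cycle `Cₙ` with distinct representative
points, there is a cyclic labeling of the vertices following the cycle
clockwise or anticlockwise (encoded as a graph automorphism `l` of `Cₙ`, the
label of `u` being `l u ∈ {0, …, n-1}`) such that the vertex labeled `0` is
first and the vertex labeled `n-1` is last in the order of representative
points (`π u` denoting the rank of `u` in that order), and `|l u - π u| ≤ 1`
for every vertex `u`.  If moreover the realization is a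
`c-AND(1)`-realization, then `l u = π u` for every `u`. -/
theorem cycle_realization_labeling (n : ℕ) (hn : 3 ≤ n) (L R p : Fin n → ℝ)
    (hreal : IsAND1Real (SimpleGraph.cycleGraph n) L R p)
    (hp : Function.Injective p)
    (π : Fin n ≃ Fin n) (hπ : ∀ u v : Fin n, π u < π v ↔ p u < p v) :
    ∃ l : SimpleGraph.cycleGraph n ≃g SimpleGraph.cycleGraph n,
      π (l.symm ⟨0, by omega⟩) = ⟨0, by omega⟩ ∧
      π (l.symm ⟨n - 1, by omega⟩) = ⟨n - 1, by omega⟩ ∧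
      (∀ u : Fin n, ((l u : ℕ) : ℤ) - ((π u : ℕ) : ℤ) ≤ 1 ∧
        ((π u : ℕ) : ℤ) - ((l u : ℕ) : ℤ) ≤ 1) ∧
      ((∀ v, p v = (L v + R v) / 2) → ∀ u, l u = π u) := by
  classical
  haveI : NeZero n := ⟨by omega⟩
  have hfpc := fpc_of_real _ L R p hreal
  set A : Fin n → Fin n → Prop :=
    fun a b => (SimpleGraph.cycleGraph n).Adj (π.symm a) (π.symm b) with hA
  have hsym : ∀ a b, A a b → A b a := fun a b h => h.symm
  have hordp : ∀ a b : Fin n, a < b ↔ p (π.symm a) < p (π.symm b) := by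
    intro a b
    rw [← hπ (π.symm a) (π.symm b), Equiv.apply_symm_apply, Equiv.apply_symm_apply]
  have hFPCA : ∀ x u v y : Fin n, x < u → u < v → v < y → A x v → A u y → A u v := by
    intro x u v y h1 h2 h3 hxv huy
    exact hfpc _ _ _ _ ((hordp x u).mp h1) ((hordp u v).mp h2) ((hordp v y).mp h3) hxv huy
  have h0n : (0:ℕ) < n := by omega
  have h1n : (1:ℕ) < n := by omega
  have hn1n : n - 1 < n := by omega
  set v0 : Fin n := π.symm ⟨0, h0n⟩ with hv0def
  set rp : Fin n ≃ Fin n := (Equiv.addLeft v0).trans π with hrpdef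
  set rm : Fin n ≃ Fin n := (Equiv.subLeft v0).trans π with hrmdef
  have hrA_p : ∀ i j : Fin n, A (rp i) (rp j) ↔ (cycleGraph n).Adj i j := by
    intro i j
    show (cycleGraph n).Adj (π.symm (π (v0 + i))) (π.symm (π (v0 + j))) ↔ _
    rw [Equiv.symm_apply_apply, Equiv.symm_apply_apply]
    rw [cycleGraph_adj', cycleGraph_adj']
    have e1 : v0 + i - (v0 + j) = i - j := by abel
    have e2 : v0 + j - (v0 + i) = j - i := by abel
    rw [e1, e2]
  have hrA_m : ∀ i j : Fin n, A (rm i) (rm j) ↔ (cycleGraph n).Adj i j := by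
    intro i j
    show (cycleGraph n).Adj (π.symm (π (v0 - i))) (π.symm (π (v0 - j))) ↔ _
    rw [Equiv.symm_apply_apply, Equiv.symm_apply_apply]
    rw [cycleGraph_adj', cycleGraph_adj']
    have e1 : v0 - i - (v0 - j) = j - i := by abel
    have e2 : v0 - j - (v0 - i) = i - j := by abel
    rw [e1, e2, or_comm]
  have hz : (⟨0, h0n⟩ : Fin n) = 0 := by
    apply Fin.ext
    simp
  have hr0p : rp ⟨0, h0n⟩ = ⟨0, h0n⟩ := by
    show π (v0 + ⟨0, h0n⟩) = ⟨0, h0n⟩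
    rw [hz, add_zero, hv0def, Equiv.apply_symm_apply]
    exact hz
  have hr0m : rm ⟨0, h0n⟩ = ⟨0, h0n⟩ := by
    show π (v0 - ⟨0, h0n⟩) = ⟨0, h0n⟩
    rw [hz, sub_zero, hv0def, Equiv.apply_symm_apply]
    exact hz
  have hchoice : ∃ r : Fin n ≃ Fin n,
      (∀ i j : Fin n, A (r i) (r j) ↔ (cycleGraph n).Adj i j) ∧
      r ⟨0, h0n⟩ = ⟨0, h0n⟩ ∧ (r ⟨1, h1n⟩ : ℕ) ≠ n - 1 := by
    by_cases hg : (rp ⟨1, h1n⟩ : ℕ) = n - 1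
    · refine ⟨rm, hrA_m, hr0m, ?_⟩
      intro hg2
      have heq : rm ⟨1, h1n⟩ = rp ⟨1, h1n⟩ := Fin.ext (by omega)
      have h2 : v0 - ⟨1, h1n⟩ = v0 + ⟨1, h1n⟩ := π.injective heq
      have h4 : (v0 - ⟨1, h1n⟩) + ⟨1, h1n⟩ = (v0 + ⟨1, h1n⟩) + ⟨1, h1n⟩ := by rw [h2]
      rw [sub_add_cancel, add_assoc] at h4
      have h5 : (0 : Fin n) = ⟨1, h1n⟩ + ⟨1, h1n⟩ := by
        have := left_eq_add.mp h4
        exact this.symm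
      have h6 := congrArg Fin.val h5
      rw [Fin.val_add] at h6
      simp only [Fin.val_mk] at h6
      rw [Nat.mod_eq_of_lt (by omega)] at h6
      simp at h6
    · exact ⟨rp, hrA_p, hr0p, hg⟩
  obtain ⟨r, hrA, hr0, hgood⟩ := hchoice
  obtain ⟨hbounds, hend⟩ := main_struct hn A hsym hFPCA r hrA hr0 hgood
  have hend' : (r ⟨n - 1, hn1n⟩ : ℕ) = n - 1 := hend
  have hmap : ∀ u v : Fin n, (cycleGraph n).Adj ((π.trans r.symm) u) ((π.trans r.symm) v)
      ↔ (cycleGraph n).Adj u v := by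
    intro u v
    show (cycleGraph n).Adj (r.symm (π u)) (r.symm (π v)) ↔ _
    rw [← hrA (r.symm (π u)) (r.symm (π v)), Equiv.apply_symm_apply, Equiv.apply_symm_apply]
    show (cycleGraph n).Adj (π.symm (π u)) (π.symm (π v)) ↔ _
    rw [Equiv.symm_apply_apply, Equiv.symm_apply_apply]
  refine ⟨⟨π.trans r.symm, fun {u v} => hmap u v⟩, ?_, ?_, ?_, ?_⟩
  · show π (π.symm (r ⟨0, by omega⟩)) = ⟨0, by omega⟩
    rw [Equiv.apply_symm_apply]
    exact hr0
  · show π (π.symm (r ⟨n - 1, by omega⟩)) = ⟨n - 1, by omega⟩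
    rw [Equiv.apply_symm_apply]
    exact Fin.ext hend
  · intro u
    have hb := hbounds (r.symm (π u))
    rw [Equiv.apply_symm_apply] at hb
    have hlval : ((⟨π.trans r.symm, fun {u v} => hmap u v⟩ :
        cycleGraph n ≃g cycleGraph n) u : Fin n) = r.symm (π u) := rfl
    rw [hlval]
    omega
  · intro hcent
    have hAdjP : ∀ (q1 q2 : ℕ) (hq1 : q1 < n) (hq2 : q2 < n),
        A (r ⟨q1, hq1⟩) (r ⟨q2, hq2⟩) ↔
          (q1 + 1 = q2 ∨ q2 + 1 = q1 ∨ (q1 = 0 ∧ q2 = n - 1) ∨ (q2 = 0 ∧ q1 = n - 1)) := by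
      intro q1 q2 hq1 hq2; rw [hrA]; exact cyc_adj_iff hn _ _
    have hfix : ∀ N : ℕ, ∀ i : Fin n, (i : ℕ) = N → r i = i := by
      intro N
      induction N using Nat.strong_induction_on with
      | _ N IH =>
        intro i hiN
        have hNn : N < n := by rw [← hiN]; exact i.isLt
        have hieq : i = ⟨N, hNn⟩ := Fin.ext hiN
        by_contra hne
        have hbi := hbounds i
        have hvne : (r i : ℕ) ≠ N := by
          intro e
          exact hne (Fin.ext (by omega))
        rcases Nat.lt_or_ge (r i : ℕ) N with hlt | hge
        · have hN1 : 1 ≤ N := by omega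
          have hNm1n : N - 1 < n := by omega
          have hprev : r ⟨N - 1, hNm1n⟩ = ⟨N - 1, hNm1n⟩ := IH (N-1) (by omega) _ rfl
          have hre : r i = r ⟨N - 1, hNm1n⟩ := by
            apply Fin.ext
            rw [hprev]
            simp only [Fin.val_mk]
            omega
          have := congrArg Fin.val (r.injective hre)
          simp only [Fin.val_mk] at this
          omega
        · have hriN1 : (r i : ℕ) = N + 1 := by omega
          have hN1n : N + 1 < n := by have := (r i).isLt; omega
          obtain ⟨j, hjval⟩ : ∃ j : Fin n, r j = ⟨N, hNn⟩ := ⟨r.symm _, Equiv.apply_symm_apply _ _⟩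
          have hjvv : (r j : ℕ) = N := by rw [hjval]
          have hjge : N ≤ (j : ℕ) := by
            by_contra hc
            push_neg at hc
            have hjj := IH (j : ℕ) (by omega) j rfl
            have := congrArg Fin.val hjj
            omega
          have hjle : (j : ℕ) ≤ N + 1 := by
            have := hbounds j
            omega
          have hjneN : (j : ℕ) ≠ N := by
            intro e
            have hji : j = i := Fin.ext (by omega)
            rw [hji] at hjvv
            omega
          have hjeq : j = ⟨N + 1, hN1n⟩ := Fin.ext (by simp only [Fin.val_mk]; omega)
          rw [hjeq] at hjval
          have hjvv' : (r ⟨N + 1, hN1n⟩ : ℕ) = N := by rw [hjval]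
          have hri' : (r ⟨N, hNn⟩ : ℕ) = N + 1 := by rw [← hieq]; exact hriN1
          have hN1 : 1 ≤ N := by
            by_contra hc
            push_neg at hc
            have h00 : i = ⟨0, h0n⟩ := Fin.ext (by simp only [Fin.val_mk]; omega)
            have hri0 : r i = ⟨0, h0n⟩ := by rw [h00]; exact hr0
            have := congrArg Fin.val hri0
            simp only [Fin.val_mk] at this
            omega
          have hN2 : N + 2 ≤ n - 1 := by
            by_contra hc
            push_neg at hc
            have he : (⟨N + 1, hN1n⟩ : Fin n) = ⟨n - 1, hn1n⟩ := Fin.ext (by simp only [Fin.val_mk]; omega)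
            rw [he] at hjvv'
            omega
          have hNm1n : N - 1 < n := by omega
          have hprev : r ⟨N - 1, hNm1n⟩ = ⟨N - 1, hNm1n⟩ := IH (N-1) (by omega) _ rfl
          have hprevv : (r ⟨N - 1, hNm1n⟩ : ℕ) = N - 1 := by rw [hprev]
          have hN2n : N + 2 < n := by omega
          obtain ⟨d, hd⟩ : ∃ d, (r ⟨N + 2, hN2n⟩ : ℕ) = d := ⟨_, rfl⟩
          have hdge : N + 2 ≤ d := by
            have hd1 : d ≠ N + 1 := by
              intro e
              have he2 : r ⟨N + 2, hN2n⟩ = r i := Fin.ext (by omega)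
              have := congrArg Fin.val (r.injective he2)
              simp only [Fin.val_mk] at this
              omega
            have hd2 : d ≠ N := by
              intro e
              have he2 : r ⟨N + 2, hN2n⟩ = r ⟨N + 1, hN1n⟩ := Fin.ext (by omega)
              have := congrArg Fin.val (r.injective he2)
              simp only [Fin.val_mk] at this
              omega
            have hd3 : ¬ d < N := by
              intro hc
              have hdn : d < n := by omega
              have hdd := IH d (by omega) ⟨d, hdn⟩ rfl
              have hddv : (r ⟨d, hdn⟩ : ℕ) = d := by rw [hdd]
              have he2 : r ⟨N + 2, hN2n⟩ = r ⟨d, hdn⟩ := Fin.ext (by omega)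
              have := congrArg Fin.val (r.injective he2)
              simp only [Fin.val_mk] at this
              omega
            omega
          have eAC : A (r ⟨N - 1, hNm1n⟩) (r ⟨N, hNn⟩) := by rw [hAdjP]; omega
          have eBD : A (r ⟨N + 1, hN1n⟩) (r ⟨N + 2, hN2n⟩) := by rw [hAdjP]; omega
          have nAB : ¬ A (r ⟨N - 1, hNm1n⟩) (r ⟨N + 1, hN1n⟩) := by rw [hAdjP]; omega
          have nCD : ¬ A (r ⟨N, hNn⟩) (r ⟨N + 2, hN2n⟩) := by rw [hAdjP]; omega
          have o1 : r ⟨N - 1, hNm1n⟩ < r ⟨N + 1, hN1n⟩ := by rw [Fin.lt_def]; omega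
          have o2 : r ⟨N + 1, hN1n⟩ < r ⟨N, hNn⟩ := by rw [Fin.lt_def]; omega
          have o3 : r ⟨N, hNn⟩ < r ⟨N + 2, hN2n⟩ := by rw [Fin.lt_def]; omega
          exact central_contra _ L R p hreal hcent
            (π.symm (r ⟨N - 1, hNm1n⟩)) (π.symm (r ⟨N + 1, hN1n⟩))
            (π.symm (r ⟨N, hNn⟩)) (π.symm (r ⟨N + 2, hN2n⟩))
            ((hordp _ _).mp o1) ((hordp _ _).mp o2) ((hordp _ _).mp o3)
            eAC eBD nAB nCD
    intro u
    show r.symm (π u) = π u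
    have hfu : r (π u) = π u := hfix (π u : ℕ) (π u) rfl
    conv_lhs => rw [← hfu]
    rw [Equiv.symm_apply_apply]
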